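/- arXiv:0707.0185 — 2 statements merged into one kernel-verified Lean document; each statement's English description precedes it below -/
import Mathlib

section
/- Let α > 0, let (r_i)_{i ≥ 1} be a sequence of real numbers with r_{i+1} ≥ r_i + 1 for all i ≥ 1, and let (v_i)_{i ≥ 1} be a sequence of real numbers such that v_{i+1} · exp(2α r_i) ≤ 1 for all i ≥ 1 and v_i · exp(2α r_i) ≥ 1 for all i ≥ 1. Then for every integer k ≥ 1, Σ_{i=1}^{k} (v_i − v_{i+1}) · exp(2α r_i) ≥ v₁ · exp(2α r₁) + (k − 1)(1 − exp(−2α)) − 1. -/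
open Filter Real Finset

/-- Abel-summation lower bound: if `r (i+1) ≥ r i + 1`, `v (i+1) * exp (2α r i) ≤ 1`
and `v i * exp (2α r i) ≥ 1` for all `i ≥ 1`, then for every `k ≥ 1`,
`∑_{i=1}^{k} (v i − v (i+1)) * exp (2α r i)
  ≥ v 1 * exp (2α r 1) + (k − 1) (1 − exp (−2α)) − 1`. -/
theorem stmt4 (α : ℝ) (hα : 0 < α) (r v : ℕ → ℝ)
    (hr : ∀ i, 1 ≤ i → r i + 1 ≤ r (i + 1))
    (hv1 : ∀ i, 1 ≤ i → v (i + 1) * Real.exp (2 * α * r i) ≤ 1)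
    (hv2 : ∀ i, 1 ≤ i → 1 ≤ v i * Real.exp (2 * α * r i)) :
    ∀ k : ℕ, 1 ≤ k →
      v 1 * Real.exp (2 * α * r 1) + ((k : ℝ) - 1) * (1 - Real.exp (-(2 * α))) - 1
        ≤ ∑ i ∈ Finset.Icc 1 k, (v i - v (i + 1)) * Real.exp (2 * α * r i) := by
  -- Strengthened statement carrying the tail term `v (k+1) * exp (2 α r k)`.
  have key : ∀ k : ℕ, 1 ≤ k →
      v 1 * Real.exp (2 * α * r 1) + ((k : ℝ) - 1) * (1 - Real.exp (-(2 * α)))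
          - v (k + 1) * Real.exp (2 * α * r k)
        ≤ ∑ i ∈ Finset.Icc 1 k, (v i - v (i + 1)) * Real.exp (2 * α * r i) := by
    intro k hk
    induction k, hk using Nat.le_induction with
    | base =>
      simp only [Finset.Icc_self, Finset.sum_singleton, Nat.cast_one]
      ring_nf
      linarith
    | succ k hk ih =>
      rw [Finset.sum_Icc_succ_top (by omega : 1 ≤ k + 1)]
      have hrk : r k + 1 ≤ r (k + 1) := hr k hk
      have h1 : Real.exp (2 * α * r k) ≤ Real.exp (-(2 * α)) * Real.exp (2 * α * r (k + 1)) := by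
        rw [← Real.exp_add]
        apply Real.exp_le_exp.2
        nlinarith
      have h2 : 1 ≤ v (k + 1) * Real.exp (2 * α * r (k + 1)) := hv2 (k + 1) (by omega)
      have hvpos : 0 < v (k + 1) := by
        have := Real.exp_pos (2 * α * r (k + 1))
        nlinarith
      have hexp1 : Real.exp (-(2 * α)) < 1 := by
        rw [Real.exp_lt_one_iff]; linarith
      -- v (k+1) * (exp (2α r(k+1)) - exp (2α r k)) ≥ 1 - exp (-2α)
      have h3 : 1 - Real.exp (-(2 * α)) ≤
          v (k + 1) * Real.exp (2 * α * r (k + 1)) - v (k + 1) * Real.exp (2 * α * r k) := by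
        have hA : v (k + 1) * Real.exp (2 * α * r k)
            ≤ v (k + 1) * Real.exp (2 * α * r (k + 1)) * Real.exp (-(2 * α)) := by
          nlinarith
        nlinarith [Real.exp_pos (-(2 * α))]
      push_cast
      nlinarith
  intro k hk
  have h := key k hk
  have h2 : v (k + 1) * Real.exp (2 * α * r k) ≤ 1 := hv1 k hk
  linarith
end

section
/- Let α > 0, let (r_i)_{i ≥ 1} be a sequence of real numbers with r_{i+1} ≥ r_i + 1 for all i ≥ 1, and let (v_i)_{i ≥ 1} be a sequence of real numbers such that v_{i+1} · exp(2α r_i) ≤ 1 for all i ≥ 1 and v_i · exp(2α r_i) ≥ 1 for all i ≥ 1. Then the partial sums Σ_{i=1}^{k} (v_i − v_{i+1}) · exp(2α r_i) tend to +∞ as k → ∞. -/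
open Filter Real Finset

/-- Divergence of the partial sums: under the hypotheses `r (i+1) ≥ r i + 1`,
`v (i+1) * exp (2α r i) ≤ 1` and `v i * exp (2α r i) ≥ 1` for all `i ≥ 1`,
the partial sums `∑_{i=1}^{k} (v i − v (i+1)) * exp (2α r i)` tend to `+∞`. -/
theorem stmt5 (α : ℝ) (hα : 0 < α) (r v : ℕ → ℝ)
    (hr : ∀ i, 1 ≤ i → r i + 1 ≤ r (i + 1))
    (hv1 : ∀ i, 1 ≤ i → v (i + 1) * Real.exp (2 * α * r i) ≤ 1)
    (hv2 : ∀ i, 1 ≤ i → 1 ≤ v i * Real.exp (2 * α * r i)) :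
    Filter.Tendsto
      (fun k : ℕ => ∑ i ∈ Finset.Icc 1 k, (v i - v (i + 1)) * Real.exp (2 * α * r i))
      Filter.atTop Filter.atTop := by
  set d := 1 - Real.exp (-(2 * α)) with hd
  have hd0 : 0 < d := by
    have h1 : Real.exp (-(2 * α)) < 1 := Real.exp_lt_one_iff.mpr (by linarith)
    linarith
  have key : ∀ k, 1 ≤ k →
      v 1 * Real.exp (2 * α * r 1) - v (k + 1) * Real.exp (2 * α * r k)
        + ((k : ℝ) - 1) * d
      ≤ ∑ i ∈ Finset.Icc 1 k, (v i - v (i + 1)) * Real.exp (2 * α * r i) := by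
    intro k hk
    induction k, hk using Nat.le_induction with
    | base => simp [sub_mul]
    | succ n hn ih =>
      rw [Finset.sum_Icc_succ_top (by omega : 1 ≤ n + 1)]
      have hvn : 0 < v (n + 1) := by
        have := hv2 (n + 1) (by omega)
        nlinarith [Real.exp_pos (2 * α * r (n + 1))]
      have han : 1 ≤ v (n + 1) * Real.exp (2 * α * r (n + 1)) := hv2 (n + 1) (by omega)
      have hbn : v (n + 1) * Real.exp (2 * α * r n)
          ≤ v (n + 1) * Real.exp (2 * α * r (n + 1)) * Real.exp (-(2 * α)) := by
        have hrle : 2 * α * r n ≤ 2 * α * r (n + 1) + -(2 * α) := by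
          have := hr n (by omega)
          nlinarith
        have := Real.exp_le_exp.mpr hrle
        rw [Real.exp_add] at this
        nlinarith
      have hstep : d ≤ v (n + 1) * Real.exp (2 * α * r (n + 1))
          - v (n + 1) * Real.exp (2 * α * r n) := by
        nlinarith
      push_cast
      linarith
  have hmono : Filter.Tendsto
      (fun k : ℕ => v 1 * Real.exp (2 * α * r 1) - 1 + ((k : ℝ) - 1) * d)
      Filter.atTop Filter.atTop := by
    have h1 : Filter.Tendsto (fun k : ℕ => (k : ℝ) - 1) Filter.atTop Filter.atTop :=
      Filter.tendsto_atTop_add_const_right _ (-1 : ℝ) tendsto_natCast_atTop_atTop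
    have h2 : Filter.Tendsto (fun k : ℕ => ((k : ℝ) - 1) * d) Filter.atTop Filter.atTop :=
      h1.atTop_mul_const hd0
    exact Filter.tendsto_atTop_add_const_left _ (v 1 * Real.exp (2 * α * r 1) - 1) h2
  apply Filter.tendsto_atTop_mono' _ _ hmono
  filter_upwards [Filter.eventually_ge_atTop 1] with k hk
  have h1 := key k hk
  have h2 := hv1 k hk
  linarith
end
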